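/- Let f ∈ ℚ_p[x] be pure of slope s = −m/n (with n = deg f, m = ord_p f(0)) with |s| < r, let g ∈ ℤ_p[x] be p^r-pure of degree d with constant coefficient b_0, and suppose f is monic with coefficients a_i. Then ord_p(Σ_{i=1}^n a_i b_0^i) > m, and hence the constant coefficient c_0 = f(g(0)) of f ∘ g satisfies ord_p(c_0) = m. -/

import Mathlib

/-- The lower convex hull of a set of points in `ℝ × (ℝ ∪ {∞})`: the points lying
within the vertical strip spanned by `S` and on or above every affine lower bound of `S`. -/
def LCH (S : Set (ℝ × EReal)) : Set (ℝ × EReal) :=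
  {q | (∃ s ∈ S, s.1 ≤ q.1) ∧ (∃ s ∈ S, q.1 ≤ s.1) ∧
    ∀ a b : ℝ, (∀ s ∈ S, ((a * s.1 + b : ℝ) : EReal) ≤ s.2) →
      ((a * q.1 + b : ℝ) : EReal) ≤ q.2}
open Polynomial

/- The `p`-adic valuation of an element of `ℚ_[p]`, with `ord_p 0 = ∞`. -/
open Classical in
noncomputable def ordp (p : ℕ) [Fact p.Prime] (x : ℚ_[p]) : EReal :=
  if x = 0 then ⊤ else ((x.valuation : ℝ) : EReal)

/-- The points `(i, ord_p a_i)` attached to a polynomial `f = Σ a_i x^i` over `ℚ_[p]`. -/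
def NPpts {p : ℕ} [Fact p.Prime] (f : Polynomial ℚ_[p]) : Set (ℝ × EReal) :=
  {q | ∃ i : ℕ, i ≤ f.natDegree ∧ q = ((i : ℝ), ordp p (f.coeff i))}

/-- The `p`-adic Newton polygon of `f`, as a region in the plane. -/
noncomputable def NP {p : ℕ} [Fact p.Prime] (f : Polynomial ℚ_[p]) : Set (ℝ × EReal) :=
  LCH (NPpts f)

/-- `f` is pure at `p` of slope `s`: its Newton polygon is the single segment from
`(0, ord_p a_0)` to `(natDegree f, ord_p a_0 + s · natDegree f)`. -/
def IsPure {p : ℕ} [Fact p.Prime] (f : Polynomial ℚ_[p]) (s : ℝ) : Prop :=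
  f.coeff 0 ≠ 0 ∧
  (∀ i ≤ f.natDegree,
    ((((f.coeff 0).valuation : ℝ) + s * i : ℝ) : EReal) ≤ ordp p (f.coeff i)) ∧
  ordp p (f.coeff f.natDegree)
    = ((((f.coeff 0).valuation : ℝ) + s * f.natDegree : ℝ) : EReal)

/-- `f` is `p^r`-pure: one segment, `ord_p a_0 = r` and `ord_p a_n = 0`. -/
def IsPrPure {p : ℕ} [Fact p.Prime] (f : Polynomial ℚ_[p]) (r : ℕ) : Prop :=
  1 ≤ f.natDegree ∧ (f.coeff 0).valuation = (r : ℤ) ∧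
  IsPure f (-(r : ℝ) / f.natDegree)


lemma padic_val_pow {p : ℕ} [Fact p.Prime] (x : ℚ_[p]) (hx : x ≠ 0) (i : ℕ) :
    (x ^ i).valuation = i * x.valuation := by
  induction i with
  | zero => simp [Padic.valuation_one]
  | succ k ih =>
      rw [pow_succ, Padic.valuation_mul (pow_ne_zero _ hx) hx, ih]
      push_cast
      ring

/-- Let `f` be monic and pure of slope `s = -m/n` (`n = deg f`, `m = ord_p f(0)`) with
`|s| < r`, and let `g ∈ ℤ_p[x]` be `p^r`-pure with constant coefficient `b_0`. Then
`ord_p (Σ_{i=1}^n a_i b_0^i) > m`, and hence the constant coefficient `c_0 = f(g(0))` of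
`f ∘ g` satisfies `ord_p c_0 = m`. -/
theorem comp_constant_coeff_valuation (p : ℕ) [Fact p.Prime] (r : ℕ) (hr : 1 ≤ r)
    (f g : Polynomial ℚ_[p]) (hmonic : f.Monic) (hn : 1 ≤ f.natDegree)
    (hpure : IsPure f (-((f.coeff 0).valuation : ℝ) / (f.natDegree : ℝ)))
    (hs : |(-((f.coeff 0).valuation : ℝ) / (f.natDegree : ℝ))| < r)
    (hgint : ∀ i, ‖g.coeff i‖ ≤ 1) (hg : IsPrPure g r) :
    ((((f.coeff 0).valuation : ℝ)) : EReal)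
        < ordp p (∑ i ∈ Finset.Icc 1 f.natDegree, f.coeff i * (g.coeff 0) ^ i) ∧
      ordp p ((f.comp g).coeff 0) = ((((f.coeff 0).valuation : ℝ)) : EReal) := by
  
  classical
  obtain ⟨hf0, hineq, _⟩ := hpure
  obtain ⟨hgdeg, hb0val, hgpure⟩ := hg
  have hb0 : g.coeff 0 ≠ 0 := hgpure.1
  set m : ℤ := (f.coeff 0).valuation with hm
  set n : ℕ := f.natDegree with hndef
  set b : ℚ_[p] := g.coeff 0 with hbdef
  set S : ℚ_[p] := ∑ i ∈ Finset.Icc 1 n, f.coeff i * b ^ i with hSdef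
  have hp1 : (1 : ℝ) < p := by exact_mod_cast (Fact.out : p.Prime).one_lt
  have hp0 : (0 : ℝ) < p := lt_trans one_pos hp1
  have hsr : -(r : ℝ) < -(m : ℝ) / n := (abs_lt.mp hs).1
  -- each term has valuation ≥ m + 1
  have hterm : ∀ i ∈ Finset.Icc 1 n, ‖f.coeff i * b ^ i‖ ≤ (p : ℝ) ^ (-(m + 1)) := by
    intro i hi
    obtain ⟨hi1, hin⟩ := Finset.mem_Icc.mp hi
    by_cases hai : f.coeff i = 0
    · simp only [hai, zero_mul, norm_zero]
      positivity
    have hbi : b ^ i ≠ 0 := pow_ne_zero _ hb0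
    have ht : f.coeff i * b ^ i ≠ 0 := mul_ne_zero hai hbi
    have hva : ((m : ℝ) + (-(m : ℝ) / n) * i) ≤ ((f.coeff i).valuation : ℝ) := by
      have := hineq i hin
      rw [ordp, if_neg hai] at this
      exact_mod_cast this
    have hvt : (f.coeff i * b ^ i).valuation
        = (f.coeff i).valuation + i * (r : ℤ) := by
      rw [Padic.valuation_mul hai hbi, padic_val_pow _ hb0, hb0val]
    have hlt : (m : ℝ) < ((f.coeff i * b ^ i).valuation : ℝ) := by
      rw [hvt]
      push_cast
      have h1 : (1 : ℝ) ≤ (i : ℝ) := by exact_mod_cast hi1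
      nlinarith [hva, hsr]
    have hge : m + 1 ≤ (f.coeff i * b ^ i).valuation := by
      have : m < (f.coeff i * b ^ i).valuation := by exact_mod_cast hlt
      omega
    rw [Padic.norm_eq_zpow_neg_valuation ht]
    exact zpow_le_zpow_right₀ (le_of_lt hp1) (by omega)
  have hSnorm : ‖S‖ ≤ (p : ℝ) ^ (-(m + 1)) :=
    IsUltrametricDist.norm_sum_le_of_forall_le_of_nonneg (by positivity) hterm
  -- first conclusion
  have part1 : (((m : ℝ)) : EReal) < ordp p S := by
    by_cases hS : S = 0
    · rw [ordp, if_pos hS]; exact EReal.coe_lt_top _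
    · rw [ordp, if_neg hS]
      have h1 : ‖S‖ = (p : ℝ) ^ (-S.valuation) := Padic.norm_eq_zpow_neg_valuation hS
      rw [h1] at hSnorm
      have h2 : -S.valuation ≤ -(m + 1) := by
        exact (zpow_le_zpow_iff_right₀ hp1).mp hSnorm
      have h3 : (m : ℝ) < (S.valuation : ℝ) := by exact_mod_cast (by omega : m < S.valuation)
      exact_mod_cast h3
  refine ⟨part1, ?_⟩
  -- c₀ = a₀ + S
  have hc : (f.comp g).coeff 0 = f.coeff 0 + S := by
    rw [Polynomial.coeff_zero_eq_eval_zero, Polynomial.eval_comp,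
      ← Polynomial.coeff_zero_eq_eval_zero, Polynomial.eval_eq_sum_range]
    have hins : Finset.range (f.natDegree + 1) = insert 0 (Finset.Icc 1 n) := by
      ext j
      simp only [Finset.mem_range, Finset.mem_insert, Finset.mem_Icc, ← hndef]
      omega
    rw [hins, Finset.sum_insert (by simp)]
    simp [hSdef, hbdef]
  have ha0norm : ‖f.coeff 0‖ = (p : ℝ) ^ (-m) := Padic.norm_eq_zpow_neg_valuation hf0
  have hlt : ‖S‖ < ‖f.coeff 0‖ := by
    rw [ha0norm]
    exact lt_of_le_of_lt hSnorm (zpow_lt_zpow_right₀ hp1 (by omega))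
  have hcnorm : ‖(f.comp g).coeff 0‖ = (p : ℝ) ^ (-m) := by
    rw [hc, Padic.add_eq_max_of_ne (ne_of_gt hlt), max_eq_left (le_of_lt hlt),
      ha0norm]
  have hcne : (f.comp g).coeff 0 ≠ 0 := by
    intro h
    rw [h, norm_zero] at hcnorm
    exact absurd hcnorm.symm (by positivity)
  rw [ordp, if_neg hcne]
  have := Padic.norm_eq_zpow_neg_valuation hcne
  rw [hcnorm] at this
  have hval : ((f.comp g).coeff 0).valuation = m := by
    have := zpow_right_injective₀ hp0 (ne_of_gt hp1) this
    omega
  rw [hval]
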